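/- Let A be an n×N real matrix, let I, J ⊆ {1,…,N} be disjoint index sets, and let L ≥ 0, U ≥ 0 be such that (1−L)‖x‖₂² ≤ ‖Ax‖₂² ≤ (1+U)‖x‖₂² for every x ∈ ℝ^N supported in I ∪ J. Then for every u ∈ ℝ^N supported in I and every v ∈ ℝ^N supported in J, |⟨Au, Av⟩| ≤ (1/2)(L+U)·‖u‖₂·‖v‖₂. -/

import Mathlib

open Finset Matrix

noncomputable def enorm2 {α : Type*} [Fintype α] (v : α → ℝ) : ℝ :=
  Real.sqrt (∑ i, (v i) ^ 2)

def restr {N : ℕ} (I : Finset (Fin N)) (x : Fin N → ℝ) : Fin N → ℝ :=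
  fun i => if i ∈ I then x i else 0

def sparse {N : ℕ} (k : ℕ) (x : Fin N → ℝ) : Prop :=
  (Finset.univ.filter fun i => x i ≠ 0).card ≤ k

def aRIP {n N : ℕ} (A : Matrix (Fin n) (Fin N) ℝ) (m : ℕ) (L U : ℝ) : Prop :=
  ∀ x : Fin N → ℝ, sparse m x →
    (1 - L) * enorm2 x ^ 2 ≤ enorm2 (A.mulVec x) ^ 2 ∧
      enorm2 (A.mulVec x) ^ 2 ≤ (1 + U) * enorm2 x ^ 2

def selects {N : ℕ} (T : Finset (Fin N)) (v : Fin N → ℝ) : Prop :=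
  ∀ i ∈ T, ∀ j ∉ T, |v j| ≤ |v i|

def subCols {n N : ℕ} (A : Matrix (Fin n) (Fin N) ℝ) (I : Finset (Fin N)) :
    Matrix (Fin n) I ℝ :=
  fun r c => A r (c : Fin N)

noncomputable def gram {n N : ℕ} (A : Matrix (Fin n) (Fin N) ℝ) (I : Finset (Fin N)) :
    Matrix I I ℝ :=
  (subCols A I)ᵀ * subCols A I

noncomputable def pinvApply {n N : ℕ} (A : Matrix (Fin n) (Fin N) ℝ) (I : Finset (Fin N))
    (y : Fin n → ℝ) : I → ℝ :=
  ((gram A I)⁻¹ * (subCols A I)ᵀ).mulVec y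

noncomputable def pinvVec {n N : ℕ} (A : Matrix (Fin n) (Fin N) ℝ) (I : Finset (Fin N))
    (y : Fin n → ℝ) : Fin N → ℝ :=
  fun i => if h : i ∈ I then pinvApply A I y ⟨i, h⟩ else 0

lemma enorm_sq {α : Type*} [Fintype α] (w : α → ℝ) : enorm2 w ^ 2 = ∑ i, w i ^ 2 :=
  Real.sq_sqrt (Finset.sum_nonneg fun i _ => sq_nonneg _)

theorem stmt3 {n N : ℕ} (A : Matrix (Fin n) (Fin N) ℝ) (I J : Finset (Fin N))
    (hIJ : Disjoint I J) (L U : ℝ) (hL : 0 ≤ L) (hU : 0 ≤ U)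
    (hA : ∀ x : Fin N → ℝ, (∀ i ∉ I ∪ J, x i = 0) →
      (1 - L) * enorm2 x ^ 2 ≤ enorm2 (A.mulVec x) ^ 2 ∧
        enorm2 (A.mulVec x) ^ 2 ≤ (1 + U) * enorm2 x ^ 2) :
    ∀ u v : Fin N → ℝ, (∀ i ∉ I, u i = 0) → (∀ j ∉ J, v j = 0) →
      |∑ i, A.mulVec u i * A.mulVec v i| ≤ (1 / 2) * (L + U) * enorm2 u * enorm2 v := by
  intro u v hu hv
  set a := enorm2 u with ha
  set b := enorm2 v with hb
  have ha0 : 0 ≤ a := Real.sqrt_nonneg _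
  have hb0 : 0 ≤ b := Real.sqrt_nonneg _
  have huv : ∀ i, u i * v i = 0 := by
    intro i
    by_cases hi : i ∈ I
    · rw [hv i (Finset.disjoint_left.mp hIJ hi)]; ring
    · rw [hu i hi]; ring
  rcases eq_or_lt_of_le (mul_nonneg ha0 hb0) with h0 | hpos
  · have hS : (∑ i, A.mulVec u i * A.mulVec v i) = 0 := by
      rcases mul_eq_zero.mp h0.symm with h | h
      · have hu0 : u = 0 := by
          funext i
          have hz : ∑ j, u j ^ 2 = 0 := by
            have := enorm_sq u; rw [← ha, h] at this; simpa using this.symm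
          have := (Finset.sum_eq_zero_iff_of_nonneg
            (fun j _ => sq_nonneg (u j))).mp hz i (Finset.mem_univ i)
          exact pow_eq_zero_iff two_ne_zero |>.mp this
        simp [hu0]
      · have hv0 : v = 0 := by
          funext i
          have hz : ∑ j, v j ^ 2 = 0 := by
            have := enorm_sq v; rw [← hb, h] at this; simpa using this.symm
          have := (Finset.sum_eq_zero_iff_of_nonneg
            (fun j _ => sq_nonneg (v j))).mp hz i (Finset.mem_univ i)
          exact pow_eq_zero_iff two_ne_zero |>.mp this
        simp [hv0]
    rw [hS]
    rw [abs_zero]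
    nlinarith [mul_nonneg ha0 hb0, mul_nonneg (mul_nonneg (add_nonneg hL hU) ha0) hb0]
  · set S := ∑ i, A.mulVec u i * A.mulVec v i with hSdef
    have su : ∑ i, u i ^ 2 = a ^ 2 := (enorm_sq u).symm
    have sv : ∑ i, v i ^ 2 = b ^ 2 := (enorm_sq v).symm
    -- supports
    have hsuppP : ∀ i ∉ I ∪ J, (b • u + a • v) i = 0 := by
      intro i hi
      rw [Finset.mem_union] at hi
      push_neg at hi
      simp [hu i hi.1, hv i hi.2]
    have hsuppM : ∀ i ∉ I ∪ J, (b • u - a • v) i = 0 := by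
      intro i hi
      rw [Finset.mem_union] at hi
      push_neg at hi
      simp [hu i hi.1, hv i hi.2]
    -- norms of combinations
    have hnP : enorm2 (b • u + a • v) ^ 2 = 2 * (a ^ 2 * b ^ 2) := by
      rw [enorm_sq (b • u + a • v)]
      have : ∀ i, ((b • u + a • v) i) ^ 2
          = b ^ 2 * u i ^ 2 + a ^ 2 * v i ^ 2 + (2 * a * b) * (u i * v i) := by
        intro i; simp only [Pi.add_apply, Pi.smul_apply, smul_eq_mul]; ring
      simp_rw [this, huv, mul_zero, add_zero]
      rw [Finset.sum_add_distrib, ← Finset.mul_sum, ← Finset.mul_sum, su, sv]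
      ring
    have hnM : enorm2 (b • u - a • v) ^ 2 = 2 * (a ^ 2 * b ^ 2) := by
      rw [enorm_sq (b • u - a • v)]
      have : ∀ i, ((b • u - a • v) i) ^ 2
          = b ^ 2 * u i ^ 2 + a ^ 2 * v i ^ 2 - (2 * a * b) * (u i * v i) := by
        intro i; simp only [Pi.sub_apply, Pi.smul_apply, smul_eq_mul]; ring
      simp_rw [this, huv, mul_zero, sub_zero]
      rw [Finset.sum_add_distrib, ← Finset.mul_sum, ← Finset.mul_sum, su, sv]
      ring
    -- images
    have hAP : A.mulVec (b • u + a • v) = b • A.mulVec u + a • A.mulVec v := by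
      rw [Matrix.mulVec_add, Matrix.mulVec_smul, Matrix.mulVec_smul]
    have hAM : A.mulVec (b • u - a • v) = b • A.mulVec u - a • A.mulVec v := by
      rw [Matrix.mulVec_sub, Matrix.mulVec_smul, Matrix.mulVec_smul]
    set P := ∑ i, A.mulVec u i ^ 2 with hP
    set Q := ∑ i, A.mulVec v i ^ 2 with hQ
    have hAnP : enorm2 (A.mulVec (b • u + a • v)) ^ 2
        = b ^ 2 * P + a ^ 2 * Q + (2 * a * b) * S := by
      rw [hAP, enorm_sq (b • A.mulVec u + a • A.mulVec v), hP, hQ, hSdef]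
      have : ∀ i, ((b • A.mulVec u + a • A.mulVec v) i) ^ 2
          = b ^ 2 * A.mulVec u i ^ 2 + a ^ 2 * A.mulVec v i ^ 2
            + (2 * a * b) * (A.mulVec u i * A.mulVec v i) := by
        intro i; simp only [Pi.add_apply, Pi.smul_apply, smul_eq_mul]; ring
      simp_rw [this]
      rw [Finset.sum_add_distrib, Finset.sum_add_distrib,
        ← Finset.mul_sum, ← Finset.mul_sum, ← Finset.mul_sum]
    have hAnM : enorm2 (A.mulVec (b • u - a • v)) ^ 2
        = b ^ 2 * P + a ^ 2 * Q - (2 * a * b) * S := by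
      rw [hAM, enorm_sq (b • A.mulVec u - a • A.mulVec v), hP, hQ, hSdef]
      have : ∀ i, ((b • A.mulVec u - a • A.mulVec v) i) ^ 2
          = b ^ 2 * A.mulVec u i ^ 2 + a ^ 2 * A.mulVec v i ^ 2
            - (2 * a * b) * (A.mulVec u i * A.mulVec v i) := by
        intro i; simp only [Pi.sub_apply, Pi.smul_apply, smul_eq_mul]; ring
      simp_rw [this]
      rw [Finset.sum_sub_distrib, Finset.sum_add_distrib,
        ← Finset.mul_sum, ← Finset.mul_sum, ← Finset.mul_sum]
    have hineqP := hA (b • u + a • v) hsuppP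
    have hineqM := hA (b • u - a • v) hsuppM
    rw [hnP, hAnP] at hineqP
    rw [hnM, hAnM] at hineqM
    have hub : (2 * a * b) * S ≤ (L + U) * (a ^ 2 * b ^ 2) := by nlinarith [hineqP.2, hineqM.1]
    have hlb : -((L + U) * (a ^ 2 * b ^ 2)) ≤ (2 * a * b) * S := by nlinarith [hineqP.1, hineqM.2]
    clear_value S P Q a b
    clear hA hu hv huv hsuppP hsuppM hnP hnM hAP hAM hAnP hAnM hineqP hineqM su sv hSdef hP hQ ha hb
    rw [abs_le]
    have h2 : 0 ≤ 2 * (a * b) * (S + 1 / 2 * (L + U) * (a * b)) := by nlinarith [hlb]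
    have h3 : 0 ≤ 2 * (a * b) * (1 / 2 * (L + U) * (a * b) - S) := by nlinarith [hub]
    have hpos2 : 0 < 2 * (a * b) := by linarith
    constructor
    · have := (mul_nonneg_iff_of_pos_left hpos2).mp h2
      linarith
    · have := (mul_nonneg_iff_of_pos_left hpos2).mp h3
      linarith
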